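/- Let d ≥ 1, let Ω ⊆ ℝ^d be a nonempty bounded open set, let ε > 0 and 0 < k ≤ ε², and fix w ∈ V. Then the discrete Allen–Cahn energy E(u) = ∫_Ω ( (1/2)|∇u(x)|² + (1/ε²)F(u(x)) + (1/(2k))(u(x) − w(x))² ) dx is strictly convex on V: for all u₁, u₂ ∈ V whose restrictions to Ω are not equal and all t ∈ (0,1), E(t u₁ + (1−t) u₂) < t E(u₁) + (1−t) E(u₂). -/

import Mathlib

open MeasureTheory Set

private lemma acx_scalar_lt (P Q c a b t : ℝ) (hP : 0 < P) (hPQ : P ≤ 2 * Q)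
    (hab : a ≠ b) (ht : 0 < t) (ht1 : t < 1) :
    P * (1 / 4 * ((t * a + (1 - t) * b) ^ 2 - 1) ^ 2) + Q * ((t * a + (1 - t) * b) - c) ^ 2
      < t * (P * (1 / 4 * (a ^ 2 - 1) ^ 2) + Q * (a - c) ^ 2)
        + (1 - t) * (P * (1 / 4 * (b ^ 2 - 1) ^ 2) + Q * (b - c) ^ 2) := by
  have h4 : (t * a + (1 - t) * b) ^ 4 < t * a ^ 4 + (1 - t) * b ^ 4 := by
    have := (Even.strictConvexOn_pow (⟨2, rfl⟩ : Even 4) (by norm_num)).2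
      (Set.mem_univ a) (Set.mem_univ b) hab ht (show (0:ℝ) < 1 - t by linarith)
      (show t + (1 - t) = 1 by ring)
    simpa [smul_eq_mul] using this
  have h2 : (t * a + (1 - t) * b) ^ 2 ≤ t * a ^ 2 + (1 - t) * b ^ 2 := by
    nlinarith [sq_nonneg (a - b), mul_nonneg ht.le (by linarith : (0:ℝ) ≤ 1 - t)]
  nlinarith [mul_lt_mul_of_pos_left h4 hP,
    mul_le_mul_of_nonneg_left h2 (by linarith : (0:ℝ) ≤ 2 * Q - P)]

private lemma acx_scalar_le (P Q c a b t : ℝ) (hP : 0 < P) (hPQ : P ≤ 2 * Q)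
    (ht : 0 < t) (ht1 : t < 1) :
    P * (1 / 4 * ((t * a + (1 - t) * b) ^ 2 - 1) ^ 2) + Q * ((t * a + (1 - t) * b) - c) ^ 2
      ≤ t * (P * (1 / 4 * (a ^ 2 - 1) ^ 2) + Q * (a - c) ^ 2)
        + (1 - t) * (P * (1 / 4 * (b ^ 2 - 1) ^ 2) + Q * (b - c) ^ 2) := by
  rcases eq_or_ne a b with rfl | hab
  · apply le_of_eq; ring
  · exact (acx_scalar_lt P Q c a b t hP hPQ hab ht ht1).le

private lemma acx_grad_le {F : Type*} [NormedAddCommGroup F] [NormedSpace ℝ F]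
    (a b : F) (t : ℝ) (ht : 0 ≤ t) (ht1 : t ≤ 1) :
    1 / 2 * ‖t • a + (1 - t) • b‖ ^ 2
      ≤ t * (1 / 2 * ‖a‖ ^ 2) + (1 - t) * (1 / 2 * ‖b‖ ^ 2) := by
  have h := norm_add_le (t • a) ((1 - t) • b)
  rw [norm_smul, norm_smul, Real.norm_eq_abs, Real.norm_eq_abs,
    abs_of_nonneg ht, abs_of_nonneg (by linarith)] at h
  nlinarith [norm_nonneg (t • a + (1 - t) • b), norm_nonneg a, norm_nonneg b,
    sq_nonneg (‖a‖ - ‖b‖), mul_nonneg ht (by linarith : (0:ℝ) ≤ 1 - t)]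

/-- Strict convexity of the discrete (fully implicit) Allen–Cahn energy
`E(u) = ∫_Ω (½|∇u|² + (1/ε²)F(u) + (1/(2k))(u−w)²)` under `0 < k ≤ ε²`. -/
theorem stmt_0 (d : ℕ) (hd : 1 ≤ d)
    (Ω : Set (EuclideanSpace ℝ (Fin d))) (hΩne : Ω.Nonempty)
    (hΩbd : Bornology.IsBounded Ω) (hΩop : IsOpen Ω)
    (ε k : ℝ) (hε : 0 < ε) (hk0 : 0 < k) (hk : k ≤ ε ^ 2)
    (w : EuclideanSpace ℝ (Fin d) → ℝ) (hw : ContDiff ℝ 1 w)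
    (E : (EuclideanSpace ℝ (Fin d) → ℝ) → ℝ)
    (hE : ∀ u, E u = ∫ x in Ω,
      (1 / 2 * ‖gradient u x‖ ^ 2
        + 1 / ε ^ 2 * (1 / 4 * ((u x) ^ 2 - 1) ^ 2)
        + 1 / (2 * k) * (u x - w x) ^ 2))
    (u₁ u₂ : EuclideanSpace ℝ (Fin d) → ℝ)
    (hu₁ : ContDiff ℝ 1 u₁) (hu₂ : ContDiff ℝ 1 u₂)
    (hne : ¬ Set.EqOn u₁ u₂ Ω)
    (t : ℝ) (ht : t ∈ Set.Ioo (0 : ℝ) 1) :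
    E (fun x => t * u₁ x + (1 - t) * u₂ x) < t * E u₁ + (1 - t) * E u₂ := by
  obtain ⟨ht0, ht1⟩ := ht
  set u₀ : EuclideanSpace ℝ (Fin d) → ℝ := fun x => t * u₁ x + (1 - t) * u₂ x with hu₀def
  have hu₀ : ContDiff ℝ 1 u₀ :=
    (contDiff_const.mul hu₁).add (contDiff_const.mul hu₂)
  -- gradient of the convex combination
  have gradcombo : ∀ x, gradient u₀ x = t • gradient u₁ x + (1 - t) • gradient u₂ x := by
    intro x
    have h1 : HasFDerivAt u₁
        ((InnerProductSpace.toDual ℝ (EuclideanSpace ℝ (Fin d))) (gradient u₁ x)) x :=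
      ((hu₁.differentiable one_ne_zero x).hasGradientAt).hasFDerivAt
    have h2 : HasFDerivAt u₂
        ((InnerProductSpace.toDual ℝ (EuclideanSpace ℝ (Fin d))) (gradient u₂ x)) x :=
      ((hu₂.differentiable one_ne_zero x).hasGradientAt).hasFDerivAt
    have h0 := (h1.const_mul t).add (h2.const_mul (1 - t))
    have h0' := hasFDerivAt_iff_hasGradientAt.mp h0
    have : gradient u₀ x = _ := h0'.gradient
    rw [this]
    simp [map_add, _root_.map_smul, gradient]
  -- continuity of gradients
  have gradcont : ∀ (u : EuclideanSpace ℝ (Fin d) → ℝ), ContDiff ℝ 1 u →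
      Continuous (gradient u) := by
    intro u hu
    have hf : Continuous (fderiv ℝ u) := hu.continuous_fderiv one_ne_zero
    exact ((InnerProductSpace.toDual ℝ (EuclideanSpace ℝ (Fin d))).symm.continuous).comp hf
  -- the three integrands
  set G : (EuclideanSpace ℝ (Fin d) → ℝ) → EuclideanSpace ℝ (Fin d) → ℝ :=
    fun u x => 1 / 2 * ‖gradient u x‖ ^ 2
        + 1 / ε ^ 2 * (1 / 4 * ((u x) ^ 2 - 1) ^ 2)
        + 1 / (2 * k) * (u x - w x) ^ 2 with hGdef
  have hGcont : ∀ (u : EuclideanSpace ℝ (Fin d) → ℝ), ContDiff ℝ 1 u → Continuous (G u) := by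
    intro u hu
    have h1 : Continuous fun x => gradient u x := gradcont u hu
    have h2 : Continuous u := hu.continuous
    have h3 : Continuous w := hw.continuous
    simp only [hGdef]
    fun_prop
  have hint : ∀ (f : EuclideanSpace ℝ (Fin d) → ℝ), Continuous f → IntegrableOn f Ω := by
    intro f hf
    have hc : IsCompact (closure Ω) := hΩbd.isCompact_closure
    exact (hf.continuousOn.integrableOn_compact hc).mono_set subset_closure
  have hI₁ : IntegrableOn (G u₁) Ω := hint _ (hGcont u₁ hu₁)
  have hI₂ : IntegrableOn (G u₂) Ω := hint _ (hGcont u₂ hu₂)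
  have hI₀ : IntegrableOn (G u₀) Ω := hint _ (hGcont u₀ hu₀)
  -- define the deficit function
  set h : EuclideanSpace ℝ (Fin d) → ℝ :=
    fun x => t * G u₁ x + (1 - t) * G u₂ x - G u₀ x with hhdef
  have hP : 0 < 1 / ε ^ 2 := by positivity
  have hPQ : 1 / ε ^ 2 ≤ 2 * (1 / (2 * k)) := by
    rw [show 2 * (1 / (2 * k)) = 1 / k by field_simp]
    apply one_div_le_one_div_of_le hk0 hk
  -- pointwise convexity
  have hscalar_le : ∀ x, 0 ≤ h x := by
    intro x
    have hg := acx_grad_le (gradient u₁ x) (gradient u₂ x) t ht0.le ht1.le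
    rw [← gradcombo x] at hg
    have hs := acx_scalar_le (1 / ε ^ 2) (1 / (2 * k)) (w x) (u₁ x) (u₂ x) t hP hPQ ht0 ht1
    simp only [hhdef, hGdef, hu₀def]
    linarith
  -- a point of strict inequality
  rw [Set.EqOn] at hne
  push_neg at hne
  obtain ⟨x₀, hx₀Ω, hx₀ne⟩ := hne
  have hx₀pos : 0 < h x₀ := by
    have hg := acx_grad_le (gradient u₁ x₀) (gradient u₂ x₀) t ht0.le ht1.le
    rw [← gradcombo x₀] at hg
    have hs := acx_scalar_lt (1 / ε ^ 2) (1 / (2 * k)) (w x₀) (u₁ x₀) (u₂ x₀) t hP hPQ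
      hx₀ne ht0 ht1
    simp only [hhdef, hGdef, hu₀def]
    linarith
  -- continuity of h
  have hhcont : Continuous h :=
    ((continuous_const.mul (hGcont u₁ hu₁)).add
      (continuous_const.mul (hGcont u₂ hu₂))).sub (hGcont u₀ hu₀)
  have hIh : IntegrableOn h Ω :=
    (((hI₁.const_mul t).add (hI₂.const_mul (1 - t))).sub hI₀)
  -- the integral of h over Ω is positive
  have hpos : 0 < ∫ x in Ω, h x := by
    rw [setIntegral_pos_iff_support_of_nonneg_ae
      (Filter.Eventually.of_forall fun x => hscalar_le x) hIh]
    have hUopen : IsOpen ({x | 0 < h x} ∩ Ω) :=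
      (isOpen_lt continuous_const hhcont).inter hΩop
    have hUne : ({x | 0 < h x} ∩ Ω).Nonempty := ⟨x₀, hx₀pos, hx₀Ω⟩
    refine lt_of_lt_of_le (hUopen.measure_pos volume hUne) (measure_mono ?_)
    intro x hx
    exact ⟨ne_of_gt hx.1, hx.2⟩
  -- conclude
  have hsplit : ∫ x in Ω, h x
      = t * (∫ x in Ω, G u₁ x) + (1 - t) * (∫ x in Ω, G u₂ x) - (∫ x in Ω, G u₀ x) := by
    have hA : IntegrableOn (fun x => t * G u₁ x + (1 - t) * G u₂ x) Ω :=
      (hI₁.const_mul t).add (hI₂.const_mul (1 - t))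
    rw [hhdef]
    rw [integral_sub hA hI₀,
      integral_add (hI₁.const_mul t) (hI₂.const_mul (1 - t)),
      integral_const_mul, integral_const_mul]
  rw [hE, hE, hE]
  have e₀ : (∫ x in Ω, (1 / 2 * ‖gradient u₀ x‖ ^ 2
        + 1 / ε ^ 2 * (1 / 4 * ((u₀ x) ^ 2 - 1) ^ 2)
        + 1 / (2 * k) * (u₀ x - w x) ^ 2)) = ∫ x in Ω, G u₀ x := rfl
  have e₁ : (∫ x in Ω, (1 / 2 * ‖gradient u₁ x‖ ^ 2
        + 1 / ε ^ 2 * (1 / 4 * ((u₁ x) ^ 2 - 1) ^ 2)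
        + 1 / (2 * k) * (u₁ x - w x) ^ 2)) = ∫ x in Ω, G u₁ x := rfl
  have e₂ : (∫ x in Ω, (1 / 2 * ‖gradient u₂ x‖ ^ 2
        + 1 / ε ^ 2 * (1 / 4 * ((u₂ x) ^ 2 - 1) ^ 2)
        + 1 / (2 * k) * (u₂ x - w x) ^ 2)) = ∫ x in Ω, G u₂ x := rfl
  rw [e₀, e₁, e₂]
  linarith [hpos, hsplit]
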